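/- Let q be a positive definite quadratic form on ℝⁿ (n ≥ 2) with associated symmetric bilinear form, and let β be a linear form on ℝⁿ with norm ‖β‖_q < 1 (i.e., sup_{q(y)=1} β(y) < 1). Then the polynomial y ↦ q(y) - β(y)² is irreducible in the polynomial ring ℝ[y¹,...,yⁿ]. -/

import Mathlib

open MvPolynomial

private lemma degsum_eq_degree {σ : Type*} (d : σ →₀ ℕ) :
    (∑ i ∈ d.support, d i) = d.degree := rfl

private lemma fdegree_add {σ : Type*} (a b : σ →₀ ℕ) :
    (a + b).degree = a.degree + b.degree := by
  simp [Finsupp.degree_eq_weight_one, map_add]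

private lemma fdegree_single {σ : Type*} (i : σ) :
    (Finsupp.single i 1 : σ →₀ ℕ).degree = 1 := by
  classical
  exact Finsupp.degree_single i 1

private lemma degree_one_struct {σ : Type*} [DecidableEq σ] (d : σ →₀ ℕ)
    (hd : d.degree = 1) : ∃ i, d = Finsupp.single i 1 := by
  have hd0 : d ≠ 0 := by
    intro h; rw [h, map_zero] at hd; omega
  obtain ⟨i, hi⟩ := Finsupp.support_nonempty_iff.mpr hd0
  have hdi : d i = 1 := by
    have h1 : 1 ≤ d i := Nat.one_le_iff_ne_zero.mpr (Finsupp.mem_support_iff.mp hi)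
    have h2 : d i ≤ 1 := hd ▸ Finsupp.le_degree i d
    omega
  refine ⟨i, ?_⟩
  ext j
  by_cases hji : j = i
  · simp [hji, hdi]
  · have hs0 : (Finsupp.single i 1 : σ →₀ ℕ) j = 0 :=
      Finsupp.single_eq_of_ne' (fun h => hji h.symm)
    rw [hs0]
    by_contra hdj
    have hjmem : j ∈ d.support := Finsupp.mem_support_iff.mpr hdj
    have hsub : ({i, j} : Finset σ) ⊆ d.support := by
      intro k hk
      simp only [Finset.mem_insert, Finset.mem_singleton] at hk
      rcases hk with rfl | rfl
      · exact hi
      · exact hjmem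
    have hle := Finset.sum_le_sum_of_subset (f := fun k => d k) hsub
    rw [Finset.sum_pair (fun h => hji h.symm)] at hle
    rw [degsum_eq_degree, hd] at hle
    omega

private lemma eval_of_td_le_one {n : ℕ} {f : MvPolynomial (Fin n) ℝ}
    (hf : f.totalDegree ≤ 1) :
    f = C (coeff 0 f) + ∑ i, C (coeff (Finsupp.single i 1) f) * X i := by
  ext d
  rw [coeff_add, coeff_C, coeff_sum]
  simp only [coeff_C_mul, coeff_X']
  rcases (show d.degree = 0 ∨ d.degree = 1 ∨ 2 ≤ d.degree by omega) with h0 | h1 | h2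
  · have hd : d = 0 := (Finsupp.degree_eq_zero_iff d).mp h0
    subst hd
    rw [if_pos rfl]
    rw [Finset.sum_eq_zero, add_zero]
    intro i _
    rw [if_neg, mul_zero]
    intro h
    have := fdegree_single i
    rw [h, map_zero] at this
    omega
  · obtain ⟨i, rfl⟩ := degree_one_struct d h1
    have hne : (Finsupp.single i 1 : Fin n →₀ ℕ) ≠ 0 := by
      intro h
      have := fdegree_single i
      rw [h, map_zero] at this; omega
    rw [if_neg (Ne.symm hne)]
    rw [Finset.sum_eq_single i]
    · rw [if_pos rfl, mul_one, zero_add]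
    · intro j _ hji
      rw [if_neg (fun h => hji ((Finsupp.single_left_inj one_ne_zero).mp h)), mul_zero]
    · intro h; exact absurd (Finset.mem_univ i) h
  · have hlhs : coeff d f = 0 := by
      apply coeff_eq_zero_of_totalDegree_lt
      rw [degsum_eq_degree]; omega
    rw [hlhs]
    have hd0 : d ≠ 0 := by
      intro h; rw [h, map_zero] at h2; omega
    rw [if_neg (Ne.symm hd0)]
    rw [Finset.sum_eq_zero, add_zero]
    intro i _
    rw [if_neg, mul_zero]
    intro h
    have := fdegree_single i
    rw [h] at this
    omega

private lemma top_component_ne_zero {n : ℕ} {f : MvPolynomial (Fin n) ℝ} (hf : f ≠ 0) :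
    homogeneousComponent f.totalDegree f ≠ 0 := by
  have hsupp : f.support.Nonempty := support_nonempty.mpr hf
  obtain ⟨d, hd, hdeq⟩ := Finset.exists_mem_eq_sup f.support hsupp
    (fun s => s.sum fun _ e => e)
  intro h
  have hc : coeff d (homogeneousComponent f.totalDegree f) = coeff d f := by
    rw [coeff_homogeneousComponent, if_pos]
    show d.degree = f.totalDegree
    rw [totalDegree, hdeq]
    rfl
  rw [h] at hc
  exact (mem_support_iff.mp hd) (by simpa using hc.symm)

private lemma top_component_mul {n : ℕ} (f g : MvPolynomial (Fin n) ℝ) :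
    homogeneousComponent (f.totalDegree + g.totalDegree) (f * g) =
      homogeneousComponent f.totalDegree f * homogeneousComponent g.totalDegree g := by
  set a := f.totalDegree with ha
  set b := g.totalDegree with hb
  ext d
  rw [coeff_homogeneousComponent, coeff_mul, coeff_mul]
  split_ifs with hd
  · refine Finset.sum_congr rfl fun x hx => ?_
    have hxd := Finset.HasAntidiagonal.mem_antidiagonal.mp hx
    have hdd : x.1.degree + x.2.degree = a + b := by rw [← fdegree_add, hxd, hd]
    rw [coeff_homogeneousComponent, coeff_homogeneousComponent]
    rcases lt_trichotomy x.1.degree a with h | h | h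
    · have hz : coeff x.2 g = 0 := by
        apply coeff_eq_zero_of_totalDegree_lt
        rw [degsum_eq_degree, ← hb]; omega
      simp [hz]
    · have h2 : x.2.degree = b := by omega
      rw [if_pos h, if_pos h2]
    · have hz : coeff x.1 f = 0 := by
        apply coeff_eq_zero_of_totalDegree_lt
        rw [degsum_eq_degree, ← ha]; omega
      simp [hz]
  · symm
    apply Finset.sum_eq_zero
    intro x hx
    have hxd := Finset.HasAntidiagonal.mem_antidiagonal.mp hx
    rw [coeff_homogeneousComponent, coeff_homogeneousComponent]
    split_ifs with h1 h2
    · exact absurd (by rw [← hxd, fdegree_add, h1, h2]) hd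
    · rw [mul_zero]
    all_goals rw [zero_mul]

private lemma totalDegree_mul_eq' {n : ℕ} {f g : MvPolynomial (Fin n) ℝ}
    (hf : f ≠ 0) (hg : g ≠ 0) :
    (f * g).totalDegree = f.totalDegree + g.totalDegree := by
  refine le_antisymm (totalDegree_mul f g) ?_
  by_contra h
  push_neg at h
  have h0 := homogeneousComponent_eq_zero _ (f * g) h
  rw [top_component_mul] at h0
  exact mul_ne_zero (top_component_ne_zero hf) (top_component_ne_zero hg) h0

private noncomputable def stdB (n : ℕ) : Fin n → (Fin n → ℝ) :=
  fun i j => if i = j then 1 else 0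

/-- If `Q` is a positive definite quadratic form on `ℝⁿ` (`n ≥ 2`) and `β` is a
linear form with `‖β‖_Q < 1` (i.e. `β(y)² < Q(y)` for all `y ≠ 0`), then the
polynomial representing `y ↦ Q(y) - β(y)²` is irreducible in `ℝ[y¹,…,yⁿ]`. -/
theorem stmt2 (n : ℕ) (hn : 2 ≤ n) (Q : QuadraticForm ℝ (Fin n → ℝ)) (hQ : Q.PosDef)
    (β : (Fin n → ℝ) →ₗ[ℝ] ℝ)
    (hβ : ∀ y : Fin n → ℝ, y ≠ 0 → (β y) ^ 2 < Q y)
    (p : MvPolynomial (Fin n) ℝ)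
    (hp : ∀ y : Fin n → ℝ, MvPolynomial.eval y p = Q y - (β y) ^ 2) :
    Irreducible p := by
  classical
  set e := stdB n with he
  have hrep : ∀ y : Fin n → ℝ, y = ∑ i, y i • e i := fun y => pi_eq_sum_univ y
  set B := QuadraticMap.associated (R := ℝ) Q with hBdef
  have hQB : ∀ y, Q y = B y y := fun y =>
    (QuadraticMap.associated_eq_self_apply ℝ Q y).symm
  have hsym : ∀ u v : Fin n → ℝ, B u v = B v u := by
    intro u v
    exact (QuadraticMap.associated_isSymm ℝ Q) u v
  have hBexp : ∀ y : Fin n → ℝ, B y y = ∑ i, ∑ j, B (e i) (e j) * (y i * y j) := by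
    intro y
    conv_lhs => rw [hrep y]
    simp only [map_sum, map_smul, LinearMap.sum_apply, LinearMap.smul_apply, smul_eq_mul]
    refine Finset.sum_congr rfl fun i _ => ?_
    rw [Finset.mul_sum]
    refine Finset.sum_congr rfl fun j _ => ?_
    rw [hsym (e j) (e i)]
    ring
  have hβexp : ∀ y : Fin n → ℝ, β y = ∑ i, β (e i) * y i := by
    intro y
    conv_lhs => rw [hrep y]
    simp only [map_sum, map_smul, smul_eq_mul]
    exact Finset.sum_congr rfl fun i _ => mul_comm _ _
  set c : Fin n → Fin n → ℝ := fun i j => B (e i) (e j) - β (e i) * β (e j) with hc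
  set P : MvPolynomial (Fin n) ℝ := ∑ i, ∑ j, C (c i j) * (X i * X j) with hP
  have hPeval : ∀ y : Fin n → ℝ, eval y P = Q y - β y ^ 2 := by
    intro y
    rw [hQB, hBexp, hβexp, hP]
    simp only [map_sum, map_mul, eval_C, eval_X]
    rw [sq, Finset.sum_mul_sum, ← Finset.sum_sub_distrib]
    refine Finset.sum_congr rfl fun i _ => ?_
    rw [← Finset.sum_sub_distrib]
    refine Finset.sum_congr rfl fun j _ => ?_
    rw [hc]
    ring
  have hpP : p = P := MvPolynomial.funext fun y => by rw [hp y, hPeval y]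
  have htdP : p.totalDegree ≤ 2 := by
    rw [hpP]
    refine (totalDegree_finset_sum _ _).trans (Finset.sup_le fun i _ => ?_)
    refine (totalDegree_finset_sum _ _).trans (Finset.sup_le fun j _ => ?_)
    have hXX : ((X i * X j : MvPolynomial (Fin n) ℝ)).totalDegree ≤ 2 := by
      refine (totalDegree_mul _ _).trans ?_
      rw [totalDegree_X, totalDegree_X]
    refine (totalDegree_mul _ _).trans ?_
    rw [totalDegree_C, zero_add]
    exact hXX
  haveI : NeZero n := ⟨by omega⟩
  have hpne : p ≠ 0 := by
    intro h0
    have hy0 : (e 0 : Fin n → ℝ) ≠ 0 := by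
      intro h
      have h1 := congrFun h (0 : Fin n)
      rw [he] at h1
      simp [stdB] at h1
    have h1 := hβ (e 0) hy0
    have h2 := hp (e 0)
    rw [h0, map_zero] at h2
    linarith
  constructor
  · intro hu
    have h := hu.map (eval (0 : Fin n → ℝ))
    rw [hp 0, map_zero, map_zero] at h
    simp at h
  · intro f g hfg
    by_contra hcon
    push_neg at hcon
    obtain ⟨huf, hug⟩ := hcon
    have hf0 : f ≠ 0 := by rintro rfl; rw [zero_mul] at hfg; exact hpne hfg
    have hg0 : g ≠ 0 := by rintro rfl; rw [mul_zero] at hfg; exact hpne hfg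
    have hsum : f.totalDegree + g.totalDegree ≤ 2 := by
      rw [← totalDegree_mul_eq' hf0 hg0, ← hfg]; exact htdP
    have key : ∀ h : MvPolynomial (Fin n) ℝ, h ≠ 0 → ¬ IsUnit h → 1 ≤ h.totalDegree := by
      intro h hh0 hhu
      by_contra hle
      push_neg at hle
      have hrep1 := eval_of_td_le_one (f := h) (by omega)
      have hcz : ∀ i : Fin n, coeff (Finsupp.single i 1) h = 0 := by
        intro i
        apply coeff_eq_zero_of_totalDegree_lt
        rw [degsum_eq_degree, fdegree_single]
        omega
      have hC : h = C (coeff 0 h) := by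
        conv_lhs => rw [hrep1]
        rw [Finset.sum_eq_zero (fun i _ => by rw [hcz i, map_zero, zero_mul]), add_zero]
      have hcne : coeff 0 h ≠ 0 := fun hz => hh0 (by rw [hC, hz, map_zero])
      refine hhu ?_
      rw [hC]
      exact (isUnit_iff_ne_zero.mpr hcne).map (C : ℝ →+* MvPolynomial (Fin n) ℝ)
    have hf1 : f.totalDegree = 1 := by
      have := key f hf0 huf; have := key g hg0 hug; omega
    have hfeq := eval_of_td_le_one (f := f) (by omega)
    set cc := coeff 0 f with hcc
    set a : Fin n → ℝ := fun i => coeff (Finsupp.single i 1) f with haa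
    have ha : ∃ i, a i ≠ 0 := by
      by_contra hall
      push_neg at hall
      have hfC : f = C cc := by
        conv_lhs => rw [hfeq]
        rw [Finset.sum_eq_zero
          (fun i _ => by
            show C (a i) * X i = 0
            rw [hall i, map_zero, zero_mul]),
          add_zero]
      rw [hfC, totalDegree_C] at hf1
      omega
    obtain ⟨i, hai⟩ := ha
    obtain ⟨j, hji⟩ : ∃ j : Fin n, j ≠ i := by
      refine ⟨if i = ⟨0, by omega⟩ then ⟨1, by omega⟩ else ⟨0, by omega⟩, ?_⟩
      split_ifs with h
      · rw [h]; intro hh; simp [Fin.ext_iff] at hh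
      · exact fun hh => h hh.symm
    set y : Fin n → ℝ := fun k => if k = i then (-(cc + a j)) / a i else if k = j then 1 else 0
      with hy
    have hyne : y ≠ 0 := by
      intro h
      have h1 := congrFun h j
      rw [hy] at h1
      simp only [if_neg hji, if_pos rfl, Pi.zero_apply] at h1
      exact one_ne_zero h1
    have hevalf : eval y f = 0 := by
      conv_lhs => rw [hfeq]
      simp only [map_add, map_sum, map_mul, eval_C, eval_X]
      have hsum2 : ∑ k, coeff (Finsupp.single k 1) f * y k = -cc := by
        rw [← Finset.sum_subset (Finset.subset_univ ({i, j} : Finset (Fin n)))]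
        · rw [Finset.sum_pair (fun h => hji h.symm)]
          show a i * y i + a j * y j = -cc
          have hyi : y i = (-(cc + a j)) / a i := by rw [hy]; simp
          have hyj : y j = 1 := by rw [hy]; simp [hji]
          rw [hyi, hyj]
          have hcanc : a i * (-(cc + a j) / a i) = -(cc + a j) := by field_simp
          rw [hcanc]
          ring
        · intro k _ hk
          simp only [Finset.mem_insert, Finset.mem_singleton] at hk
          push_neg at hk
          have hyk : y k = 0 := by rw [hy]; simp [hk.1, hk.2]
          rw [hyk, mul_zero]
      rw [hsum2]
      ring
    have h1 := hβ y hyne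
    have h2 := hp y
    rw [hfg, map_mul, hevalf, zero_mul] at h2
    linarith
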